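/- Let L be a field with a surjective discrete valuation ν, residue field l of characteristic 0, and let g be an automorphism of L of finite order preserving ν. If g induces the identity on L_{≥0}/L_{≥1} and on L_{≥1}/L_{≥2}, then g is the identity automorphism of L. -/

import Mathlib

open Multiplicative
namespace Stmt1Aux
local notation "Γ₀" => WithZero (Multiplicative ℤ)
local notation "ω" => ((Multiplicative.ofAdd (-1 : ℤ) : Multiplicative ℤ) : WithZero (Multiplicative ℤ))

lemma omega_lt_one : ω < (1 : Γ₀) := by
  rw [← WithZero.coe_one, WithZero.coe_lt_coe]; decide

variable {L : Type*} [Field L] (v : Valuation L Γ₀)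

lemma val_one_add (ε : L) (hε : v ε < 1) : v (1 + ε) = 1 := by
  have := v.map_add_eq_of_lt_left (x := (1:L)) (y := ε) (by rwa [v.map_one])
  rwa [v.map_one] at this

lemma powB (ε : L) (hε : v ε ≤ ω) (m : ℤ) : v ((1 + ε) ^ m - 1) ≤ ω := by
  have hε1 : v ε < 1 := lt_of_le_of_lt hε omega_lt_one
  have h1ε : v (1 + ε) = 1 := val_one_add v ε hε1
  have h1ε0 : (1 + ε) ≠ 0 := by
    intro h; rw [h, v.map_zero] at h1ε; exact zero_ne_one h1ε
  have hnat : ∀ n : ℕ, v ((1 + ε) ^ n - 1) ≤ ω := by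
    intro n
    induction n with
    | zero => simp
    | succ n ih =>
      have hrw : (1 + ε) ^ (n + 1) - 1 = ((1 + ε) ^ n - 1) * (1 + ε) + ε := by ring
      rw [hrw]
      refine le_trans (v.map_add _ _) (max_le ?_ hε)
      rw [v.map_mul, h1ε, mul_one]; exact ih
  rcases m with n | n
  · simpa using hnat n
  · rw [zpow_negSucc]
    have hrw : ((1 + ε) ^ (n + 1))⁻¹ - 1
        = ((1 + ε) ^ (n + 1))⁻¹ * (1 - (1 + ε) ^ (n + 1)) := by
      field_simp
    rw [hrw, v.map_mul, map_inv₀, map_pow, h1ε, one_pow, inv_one, one_mul,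
      v.map_sub_swap]
    exact hnat (n + 1)

lemma claimA (hv : Function.Surjective v) (g : L ≃+* L)
    (hpres : ∀ x : L, v (g x) = v x)
    (h1 : ∀ x : L, v x ≤ 1 → v (g x - x) ≤ ω)
    (h2 : ∀ x : L, v x ≤ ω → v (g x - x) ≤ ((Multiplicative.ofAdd (-2 : ℤ) : Multiplicative ℤ) : Γ₀))
    (x : L) : v (g x - x) ≤ ω * v x := by
  rcases eq_or_ne x 0 with rfl | hx
  · simp
  have hvx0 : v x ≠ 0 := v.ne_zero_iff.mpr hx
  obtain ⟨π, hπ⟩ := hv ω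
  have hπ0 : π ≠ 0 := by
    intro h; rw [h, v.map_zero] at hπ; exact WithZero.coe_ne_zero hπ.symm
  obtain ⟨γ, hγ⟩ := WithZero.ne_zero_iff_exists.mp hvx0
  set m : ℤ := -(toAdd γ) with hm
  have hπm : v (π ^ m) = v x := by
    rw [map_zpow₀, hπ, ← WithZero.coe_zpow, ← hγ, WithZero.coe_inj,
      ← ofAdd_zsmul]
    simp [hm]
  have hπm0 : π ^ m ≠ 0 := zpow_ne_zero _ hπ0
  set u : L := x / π ^ m with hu
  have hxu : x = u * π ^ m := by rw [hu, div_mul_cancel₀ _ hπm0]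
  have hvu : v u = 1 := by
    rw [hu, map_div₀, hπm, div_self hvx0]
  set ε : L := g π / π - 1 with hεdef
  have hgπ : g π = π * (1 + ε) := by rw [hεdef, add_sub_cancel, mul_comm, div_mul_cancel₀ _ hπ0]
  have hε : v ε ≤ ω := by
    have hεq : ε = (g π - π) / π := by rw [hεdef, sub_div, div_self hπ0]
    have h2π := h2 π (le_of_eq hπ)
    rw [hεq, map_div₀, hπ]
    rw [div_le_iff₀ (by simp [WithZero.zero_lt_coe])]
    refine le_trans h2π (le_of_eq ?_)
    rw [← WithZero.coe_mul, WithZero.coe_inj, ← ofAdd_add]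
    norm_num
  have hε1 : v ε < 1 := lt_of_le_of_lt hε omega_lt_one
  have h1ε : v (1 + ε) = 1 := val_one_add v ε hε1
  have hdecomp : g x - x
      = (g u - u) * (π ^ m * (1 + ε) ^ m) + u * (π ^ m * ((1 + ε) ^ m - 1)) := by
    have hgx : g x = g u * (g π) ^ m := by rw [hxu, map_mul, map_zpow₀]
    rw [hgx, hgπ, mul_zpow]
    conv_lhs => rw [hxu]
    ring
  rw [hdecomp]
  refine le_trans (v.map_add _ _) (max_le ?_ ?_)
  · have : v ((g u - u) * (π ^ m * (1 + ε) ^ m)) = v (g u - u) * v x := by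
      rw [v.map_mul, v.map_mul, hπm, map_zpow₀, h1ε, one_zpow, mul_one]
    rw [this]
    exact mul_le_mul_left (h1 u (le_of_eq hvu)) _
  · have : v (u * (π ^ m * ((1 + ε) ^ m - 1)))
        = v x * v ((1 + ε) ^ m - 1) := by
      rw [v.map_mul, v.map_mul, hπm, hvu, one_mul]
    rw [this, mul_comm]
    exact mul_le_mul_left (powB v ε hε m) _


lemma val_natCast_eq_one [CharZero (IsLocalRing.ResidueField v.valuationSubring)]
    (n : ℕ) (hn : n ≠ 0) : v (n : L) = 1 := by
  have hmem : ((n : v.valuationSubring) : L) = (n : L) := by push_cast; ring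
  have hle : v (n : L) ≤ 1 := by
    rw [← hmem]; exact (n : v.valuationSubring).2
  rcases lt_or_eq_of_le hle with hlt | heq
  · exfalso
    have hmax : (n : v.valuationSubring) ∈ IsLocalRing.maximalIdeal v.valuationSubring := by
      rw [ValuationSubring.valuation_lt_one_iff]
      exact (Valuation.isEquiv_valuation_valuationSubring v).lt_one_iff_lt_one.mp
        (by rwa [hmem])
    have hres : IsLocalRing.residue v.valuationSubring (n : v.valuationSubring) = 0 :=
      (Ideal.Quotient.eq_zero_iff_mem).mpr hmax
    rw [map_natCast] at hres
    exact Nat.cast_ne_zero.mpr hn hres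
  · exact heq

theorem main (hv : Function.Surjective v)
    [CharZero (IsLocalRing.ResidueField v.valuationSubring)]
    (g : L ≃+* L) (hfin : IsOfFinOrder g)
    (hpres : ∀ x : L, v (g x) = v x)
    (h1 : ∀ x : L, v x ≤ 1 → v (g x - x) ≤ ω)
    (h2 : ∀ x : L, v x ≤ ω → v (g x - x) ≤ ((Multiplicative.ofAdd (-2 : ℤ) : Multiplicative ℤ) : Γ₀)) :
    g = RingEquiv.refl L := by
  by_contra hne
  have hx' : ∃ x : L, g x ≠ x := by
    by_contra h; push_neg at h
    exact hne (RingEquiv.ext fun x => h x)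
  obtain ⟨x, hx⟩ := hx'
  obtain ⟨y, hy⟩ : ∃ y : L, y = g x - x := ⟨_, rfl⟩
  have hy0 : y ≠ 0 := by rw [hy]; exact sub_ne_zero.mpr hx
  have hvy0 : v y ≠ 0 := v.ne_zero_iff.mpr hy0
  have hA := claimA v hv g hpres h1 h2
  have hpow : ∀ (k : ℕ) (z : L), (g ^ (k + 1)) z = (g ^ k) (g z) := by
    intro k z; rw [pow_succ]; rfl
  have hpresk : ∀ (k : ℕ) (z : L), v ((g ^ k) z) = v z := by
    intro k
    induction k with
    | zero => intro z; rfl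
    | succ k ih => intro z; rw [hpow k z, ih (g z), hpres z]
  have hky : ∀ k : ℕ, v ((g ^ k) y - y) ≤ ω * v y := by
    intro k
    induction k with
    | zero =>
      have h0 : (g ^ 0) y = y := rfl
      rw [h0, sub_self, v.map_zero]
      exact zero_le'
    | succ k ih =>
      have hrw : (g ^ (k + 1)) y - y = (g ^ k) (g y - y) + ((g ^ k) y - y) := by
        rw [hpow k y, map_sub]; ring
      rw [hrw]
      refine le_trans (v.map_add _ _) (max_le ?_ ih)
      rw [hpresk k (g y - y)]
      exact hA y
  have hstep2 : ∀ k : ℕ, v ((g ^ k) x - x - (k : L) * y) ≤ ω * v y := by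
    intro k
    induction k with
    | zero =>
      have h0 : (g ^ 0) x = x := rfl
      rw [h0]
      simp only [Nat.cast_zero, zero_mul, sub_zero, sub_self, v.map_zero]
      exact zero_le'
    | succ k ih =>
      have hrw : (g ^ (k + 1)) x - x - ((k : ℕ) + 1 : L) * y
          = ((g ^ k) x - x - (k : L) * y) + ((g ^ k) y - y) := by
        rw [hpow k x, show g x = x + y from by rw [hy]; ring, map_add]
        ring
      push_cast
      rw [hrw]
      exact le_trans (v.map_add _ _) (max_le ih (hky k))
  set n := orderOf g with hn
  have hnpos : 0 < n := hfin.orderOf_pos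
  have hgn : g ^ n = 1 := pow_orderOf_eq_one g
  have hgnx : (g ^ n) x = x := by rw [hgn]; rfl
  have hfinal := hstep2 n
  rw [hgnx] at hfinal
  have : v ((n : L) * y) ≤ ω * v y := by
    have hrw : x - x - (n : L) * y = -((n : L) * y) := by ring
    rwa [hrw, v.map_neg] at hfinal
  rw [v.map_mul, val_natCast_eq_one v n hnpos.ne', one_mul] at this
  obtain ⟨δ, hδ⟩ := WithZero.ne_zero_iff_exists.mp hvy0
  rw [← hδ, ← WithZero.coe_mul, WithZero.coe_le_coe] at this
  have h2 := Multiplicative.toAdd_le.mpr this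
  simp only [toAdd_mul, toAdd_ofAdd] at h2
  omega

end Stmt1Aux

/-- if the residue field of a surjective discrete valuation on `L` has
characteristic `0`, and `g` is a valuation-preserving field automorphism of `L`
of finite order inducing the identity on `L_{≥0}/L_{≥1}` and on `L_{≥1}/L_{≥2}`,
then `g` is the identity. -/
theorem stmt1 (L : Type*) [Field L]
    (v : Valuation L (WithZero (Multiplicative ℤ)))
    (hv : Function.Surjective v)
    [CharZero (IsLocalRing.ResidueField v.valuationSubring)]
    (g : L ≃+* L)
    (hfin : IsOfFinOrder g)
    (hpres : ∀ x : L, v (g x) = v x)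
    (h1 : ∀ x : L, v x ≤ 1 →
      v (g x - x) ≤ ((Multiplicative.ofAdd (-1 : ℤ) : Multiplicative ℤ) :
        WithZero (Multiplicative ℤ)))
    (h2 : ∀ x : L, v x ≤ ((Multiplicative.ofAdd (-1 : ℤ) : Multiplicative ℤ) :
        WithZero (Multiplicative ℤ)) →
      v (g x - x) ≤ ((Multiplicative.ofAdd (-2 : ℤ) : Multiplicative ℤ) :
        WithZero (Multiplicative ℤ))) :
    g = RingEquiv.refl L := by
  exact Stmt1Aux.main v hv g hfin hpres h1 h2
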